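/- Let N > 1, K = N−1 and D = π, and set k_π = ∫₀^π (sin t)^{N−1} dt. Then for every ε > 0 there exists v̄ > 0, depending only on N and ε, such that for every a ∈ (0, π), if v := v_{N−1,N,π}(a) < v̄ then |f_{N−1,N,π}(a)·k_π^{1/N} / (N^{(N−1)/N} v^{(N−1)/N}) − 1| ≤ ε. In other words, Ĩ_{N−1,N,π}(v) = f_{N−1,N,π}(a_{N−1,N,π}(v)) = k_π^{−1/N} N^{(N−1)/N} v^{(N−1)/N} (1 + o(1)) as v → 0⁺. -/

import Mathlib

open MeasureTheory Filter Set

/-- The function `s_κ`. -/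
noncomputable def sK (κ θ : ℝ) : ℝ :=
  if 0 < κ then Real.sin (Real.sqrt κ * θ) / Real.sqrt κ
  else if κ = 0 then θ
  else Real.sinh (Real.sqrt (-κ) * θ) / Real.sqrt (-κ)

/-- `k_D = ∫₀^D s_κ(t)^(N-1) dt`. -/
noncomputable def kD (κ N D : ℝ) : ℝ := ∫ t in (0:ℝ)..D, sK κ t ^ (N - 1)

/-- The function `f_{K,N,D}` (with `K = κ(N-1)`). -/
noncomputable def fKND (κ N D x : ℝ) : ℝ :=
  ((∫ y in (0:ℝ)..x, (sK κ (D - y) / sK κ (D - x)) ^ (N - 1)) +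
    ∫ y in x..D, (sK κ y / sK κ x) ^ (N - 1))⁻¹

/-- The model density `h^a_{K,N,D}` (with `K = κ(N-1)`). -/
noncomputable def hKND (κ N D a x : ℝ) : ℝ :=
  if x ≤ a then fKND κ N D a * (sK κ (D - x) / sK κ (D - a)) ^ (N - 1)
  else fKND κ N D a * (sK κ x / sK κ a) ^ (N - 1)

/-- The volume map `v_{K,N,D}(a) = ∫₀^a h^a_{K,N,D}`. -/
noncomputable def vKND (κ N D a : ℝ) : ℝ := ∫ x in (0:ℝ)..a, hKND κ N D a x

/-- `ω_N = π^(N/2)/Γ(N/2+1)`. -/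
noncomputable def omegaN (N : ℝ) : ℝ := Real.pi ^ (N / 2) / Real.Gamma (N / 2 + 1)

/-- `Vol_{K,N}(r) = N ω_N ∫₀^r s_κ(t)^(N-1) dt` (with `K = κ(N-1)`). -/
noncomputable def VolKN (κ N r : ℝ) : ℝ := N * omegaN N * ∫ t in (0:ℝ)..r, sK κ t ^ (N - 1)

/-- The coefficient `σ^{(s)}_{K,N-1}(θ)`, valued in `[0,∞]`. -/
noncomputable def sigmaE (K N s θ : ℝ) : ENNReal :=
  if (N - 1) * Real.pi ^ 2 ≤ K * θ ^ 2 then ⊤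
  else ENNReal.ofReal (sK (K / (N - 1)) (s * θ) / sK (K / (N - 1)) θ)

/-- A nonnegative continuous function `h` on the interval `I` is an `MCP(K,N)` density. -/
def IsMCPDensity (K N : ℝ) (I : Set ℝ) (h : ℝ → ℝ) : Prop :=
  ContinuousOn h I ∧ (∀ x ∈ I, 0 ≤ h x) ∧
    ∀ x₀ ∈ I, ∀ x₁ ∈ I, ∀ t ∈ Set.Icc (0:ℝ) 1,
      sigmaE K N (1 - t) |x₁ - x₀| ^ (N - 1) * ENNReal.ofReal (h x₀) ≤
        ENNReal.ofReal (h (t * x₁ + (1 - t) * x₀))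

/-- The measure `h·𝓛¹` restricted to `[0,D]`. -/
noncomputable def mcMeasure (D : ℝ) (h : ℝ → ℝ) : Measure ℝ :=
  (volume.restrict (Set.Icc 0 D)).withDensity fun x => ENNReal.ofReal (h x)

/-- The outer Minkowski content `μ⁺(E) = liminf_{ρ→0⁺} (μ(E^ρ) - μ(E))/ρ`. -/
noncomputable def minkContent (μ : Measure ℝ) (E : Set ℝ) : ℝ :=
  Filter.liminf (fun ρ : ℝ => ((μ (Metric.thickening ρ E)).toReal - (μ E).toReal) / ρ)
    (nhdsWithin 0 (Set.Ioi 0))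

/-- aux: sK 1 = sin -/
lemma sK_one (θ : ℝ) : sK 1 θ = Real.sin θ := by
  simp [sK, Real.sqrt_one]

/-- aux: G -/
noncomputable def Gs (N a : ℝ) : ℝ := ∫ t in (0:ℝ)..a, Real.sin t ^ (N - 1)

lemma cont_sinpow (N : ℝ) (hN : 1 < N) : Continuous fun t : ℝ => Real.sin t ^ (N - 1) := by
  rw [continuous_iff_continuousAt]
  intro x
  exact (Real.continuousAt_rpow_const _ _ (Or.inr (by linarith))).comp
    Real.continuous_sin.continuousAt

lemma cont_idpow (N : ℝ) (hN : 1 < N) : Continuous fun t : ℝ => t ^ (N - 1) := by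
  rw [continuous_iff_continuousAt]
  intro x
  exact Real.continuousAt_rpow_const _ _ (Or.inr (by linarith))

lemma Gs_pos (N : ℝ) (hN : 1 < N) {a : ℝ} (h0 : 0 < a) (hπ : a ≤ Real.pi) : 0 < Gs N a := by
  apply intervalIntegral.intervalIntegral_pos_of_pos_on
    ((cont_sinpow N hN).intervalIntegrable _ _)
  · intro x hx
    exact Real.rpow_pos_of_pos (Real.sin_pos_of_pos_of_lt_pi hx.1 (lt_of_lt_of_le hx.2 hπ)) _
  · exact h0

lemma Gs_mono (N : ℝ) (hN : 1 < N) {a b : ℝ} (h0 : 0 ≤ a) (hab : a ≤ b) (hb : b ≤ Real.pi) :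
    Gs N a ≤ Gs N b := by
  have h1 : Gs N a + ∫ t in a..b, Real.sin t ^ (N - 1) = Gs N b :=
    intervalIntegral.integral_add_adjacent_intervals
      ((cont_sinpow N hN).intervalIntegrable _ _) ((cont_sinpow N hN).intervalIntegrable _ _)
  have h2 : 0 ≤ ∫ t in a..b, Real.sin t ^ (N - 1) := by
    apply intervalIntegral.integral_nonneg hab
    intro u hu
    exact Real.rpow_nonneg
      (Real.sin_nonneg_of_nonneg_of_le_pi (le_trans h0 hu.1) (le_trans hu.2 hb)) _
  linarith

lemma fKND_eq (N : ℝ) (hN : 1 < N) {a : ℝ} (ha : a ∈ Set.Ioo 0 Real.pi) :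
    fKND 1 N Real.pi a = Real.sin a ^ (N - 1) / Gs N Real.pi := by
  obtain ⟨ha0, haπ⟩ := ha
  have hsa : 0 < Real.sin a := Real.sin_pos_of_pos_of_lt_pi ha0 haπ
  have hS : 0 < Real.sin a ^ (N - 1) := Real.rpow_pos_of_pos hsa _
  have h1 : (∫ y in (0:ℝ)..a, (sK 1 (Real.pi - y) / sK 1 (Real.pi - a)) ^ (N - 1)) =
      Gs N a / Real.sin a ^ (N - 1) := by
    rw [show (∫ y in (0:ℝ)..a, (sK 1 (Real.pi - y) / sK 1 (Real.pi - a)) ^ (N - 1)) =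
        ∫ y in (0:ℝ)..a, Real.sin y ^ (N - 1) / Real.sin a ^ (N - 1) from
      intervalIntegral.integral_congr ?_, intervalIntegral.integral_div]
    · rfl
    · intro y hy
      rw [Set.uIcc_of_le ha0.le] at hy
      simp only [sK_one, Real.sin_pi_sub]
      exact Real.div_rpow (Real.sin_nonneg_of_nonneg_of_le_pi hy.1 (le_trans hy.2 haπ.le))
        hsa.le _
  have h2 : (∫ y in a..Real.pi, (sK 1 y / sK 1 a) ^ (N - 1)) =
      (Gs N Real.pi - Gs N a) / Real.sin a ^ (N - 1) := by
    have hadd : Gs N a + ∫ t in a..Real.pi, Real.sin t ^ (N - 1) = Gs N Real.pi :=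
      intervalIntegral.integral_add_adjacent_intervals
        ((cont_sinpow N hN).intervalIntegrable _ _) ((cont_sinpow N hN).intervalIntegrable _ _)
    rw [show (∫ y in a..Real.pi, (sK 1 y / sK 1 a) ^ (N - 1)) =
        ∫ y in a..Real.pi, Real.sin y ^ (N - 1) / Real.sin a ^ (N - 1) from
      intervalIntegral.integral_congr ?_, intervalIntegral.integral_div]
    · rw [show (∫ y in a..Real.pi, Real.sin y ^ (N - 1)) = Gs N Real.pi - Gs N a by linarith]
    · intro y hy
      rw [Set.uIcc_of_le haπ.le] at hy
      simp only [sK_one]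
      exact Real.div_rpow (Real.sin_nonneg_of_nonneg_of_le_pi (le_trans ha0.le hy.1) hy.2)
        hsa.le _
  rw [fKND, h1, h2]
  rw [← add_div, show Gs N a + (Gs N Real.pi - Gs N a) = Gs N Real.pi by ring]
  rw [inv_div]

lemma vKND_eq (N : ℝ) (hN : 1 < N) {a : ℝ} (ha : a ∈ Set.Ioo 0 Real.pi) :
    vKND 1 N Real.pi a = Gs N a / Gs N Real.pi := by
  obtain ⟨ha0, haπ⟩ := ha
  have hsa : 0 < Real.sin a := Real.sin_pos_of_pos_of_lt_pi ha0 haπ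
  have hS : 0 < Real.sin a ^ (N - 1) := Real.rpow_pos_of_pos hsa _
  have h1 : vKND 1 N Real.pi a =
      ∫ x in (0:ℝ)..a, fKND 1 N Real.pi a * (Real.sin x ^ (N - 1) / Real.sin a ^ (N - 1)) := by
    apply intervalIntegral.integral_congr
    intro x hx
    rw [Set.uIcc_of_le ha0.le] at hx
    rw [hKND, if_pos hx.2]
    simp only [sK_one, Real.sin_pi_sub]
    rw [Real.div_rpow (Real.sin_nonneg_of_nonneg_of_le_pi hx.1 (le_trans hx.2 haπ.le)) hsa.le]
  rw [h1, intervalIntegral.integral_const_mul]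
  have h2 : (∫ x in (0:ℝ)..a, Real.sin x ^ (N - 1) / Real.sin a ^ (N - 1)) =
      Gs N a / Real.sin a ^ (N - 1) := intervalIntegral.integral_div _ _
  rw [h2, fKND_eq N hN ⟨ha0, haπ⟩]
  rw [div_mul_div_comm, mul_comm (Gs N Real.pi) (Real.sin a ^ (N - 1)),
    mul_div_mul_left _ _ (ne_of_gt hS)]

lemma tendsto_R (N : ℝ) (hN : 1 < N) :
    Tendsto (fun a => Real.sin a ^ (N - 1) / (N * Gs N a) ^ ((N - 1) / N))
      (nhdsWithin 0 (Set.Ioi 0)) (nhds 1) := by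
  have hN0 : (0:ℝ) < N := by linarith
  set p : ℝ := (N - 1) / N with hp
  have hπ1 : (1:ℝ) ≤ Real.pi := by linarith [Real.pi_gt_three]
  -- T1 : (sin a / a)^(N-1) → 1
  have hslope : Tendsto (fun a : ℝ => Real.sin a / a) (nhdsWithin 0 {0}ᶜ) (nhds 1) := by
    have h := hasDerivAt_iff_tendsto_slope.1 (Real.hasDerivAt_sin 0)
    simp only [Real.cos_zero] at h
    have he : slope Real.sin 0 = fun a : ℝ => Real.sin a / a := by
      funext a; simp [slope_def_field]
    rwa [he] at h
  have hsub : nhdsWithin (0:ℝ) (Set.Ioi 0) ≤ nhdsWithin 0 {0}ᶜ :=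
    nhdsWithin_mono _ (fun x hx => ne_of_gt hx)
  have T1 : Tendsto (fun a : ℝ => (Real.sin a / a) ^ (N - 1))
      (nhdsWithin 0 (Set.Ioi 0)) (nhds 1) := by
    have hc : ContinuousAt (fun x : ℝ => x ^ (N - 1)) 1 :=
      Real.continuousAt_rpow_const 1 (N - 1) (Or.inl one_ne_zero)
    have := hc.tendsto.comp (hslope.mono_left hsub)
    simpa [Real.one_rpow, Function.comp_def] using this
  -- ∫₀^a y^(N-1) = a^N/N
  have hint : ∀ a : ℝ, 0 < a → (∫ y in (0:ℝ)..a, y ^ (N - 1)) = a ^ N / N := by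
    intro a ha
    rw [integral_rpow (Or.inl (by linarith))]
    rw [show N - 1 + 1 = N by ring, Real.zero_rpow (ne_of_gt hN0)]
    ring
  -- upper bound
  have hQle : ∀ a ∈ Set.Ioo (0:ℝ) 1, N * Gs N a / a ^ N ≤ 1 := by
    intro a ha
    have hpow : 0 < a ^ N := Real.rpow_pos_of_pos ha.1 N
    rw [div_le_one hpow]
    have hle : Gs N a ≤ (∫ y in (0:ℝ)..a, y ^ (N - 1)) := by
      apply intervalIntegral.integral_mono_on ha.1.le
        ((cont_sinpow N hN).intervalIntegrable _ _) ((cont_idpow N hN).intervalIntegrable _ _)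
      intro y hy
      exact Real.rpow_le_rpow
        (Real.sin_nonneg_of_nonneg_of_le_pi hy.1 (le_trans hy.2 (le_trans ha.2.le hπ1)))
        (Real.sin_le hy.1) (by linarith)
    rw [hint a ha.1, le_div_iff₀ hN0] at hle
    nlinarith [hle]
  -- lower bound
  have hQge : ∀ a ∈ Set.Ioo (0:ℝ) 1, (1 - a ^ 2 / 4) ^ (N - 1) ≤ N * Gs N a / a ^ N := by
    intro a ha
    have hc : 0 < 1 - a ^ 2 / 4 := by nlinarith [ha.1, ha.2]
    have hpow : 0 < a ^ N := Real.rpow_pos_of_pos ha.1 N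
    rw [le_div_iff₀ hpow]
    have key : (∫ y in (0:ℝ)..a, ((1 - a ^ 2 / 4) * y) ^ (N - 1)) ≤ Gs N a := by
      apply intervalIntegral.integral_mono_on ha.1.le
        ?_ ((cont_sinpow N hN).intervalIntegrable _ _)
      · intro y hy
        rcases eq_or_lt_of_le hy.1 with h0 | h0
        · simp [← h0, Real.zero_rpow (show N - 1 ≠ 0 by linarith)]
        · have hsin : (1 - a ^ 2 / 4) * y ≤ Real.sin y := by
            have hcube := Real.sin_gt_sub_cube h0
            nlinarith [mul_nonneg (mul_nonneg h0.le (sub_nonneg.2 hy.2))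
              (by linarith [ha.1, h0] : (0:ℝ) ≤ a + y)]
          exact Real.rpow_le_rpow (by positivity) hsin (by linarith)
      · exact (((cont_idpow N hN).comp (continuous_const.mul continuous_id)).intervalIntegrable _ _)
    have expand : (∫ y in (0:ℝ)..a, ((1 - a ^ 2 / 4) * y) ^ (N - 1))
        = (1 - a ^ 2 / 4) ^ (N - 1) * (a ^ N / N) := by
      rw [show (∫ y in (0:ℝ)..a, ((1 - a ^ 2 / 4) * y) ^ (N - 1))
          = ∫ y in (0:ℝ)..a, (1 - a ^ 2 / 4) ^ (N - 1) * y ^ (N - 1) from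
        intervalIntegral.integral_congr ?_]
      · rw [intervalIntegral.integral_const_mul, hint a ha.1]
      · intro y hy
        rw [Set.uIcc_of_le ha.1.le] at hy
        exact Real.mul_rpow hc.le hy.1
    rw [expand] at key
    have hrw : (1 - a ^ 2 / 4) ^ (N - 1) * a ^ N
        = N * ((1 - a ^ 2 / 4) ^ (N - 1) * (a ^ N / N)) := by
      field_simp
    rw [hrw]
    exact mul_le_mul_of_nonneg_left key hN0.le
  -- squeeze
  have hmem : Set.Ioo (0:ℝ) 1 ∈ nhdsWithin (0:ℝ) (Set.Ioi 0) :=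
    Ioo_mem_nhdsGT_of_mem (by constructor <;> norm_num)
  have Tlow : Tendsto (fun a : ℝ => (1 - a ^ 2 / 4) ^ (N - 1)) (nhds (0:ℝ)) (nhds 1) := by
    have h1 : Tendsto (fun a : ℝ => 1 - a ^ 2 / 4) (nhds (0:ℝ)) (nhds 1) := by
      have hcont : Continuous fun a : ℝ => 1 - a ^ 2 / 4 := by continuity
      have := hcont.tendsto 0
      norm_num at this
      exact this
    have h2 : ContinuousAt (fun x : ℝ => x ^ (N - 1)) 1 :=
      Real.continuousAt_rpow_const 1 (N - 1) (Or.inl one_ne_zero)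
    simpa [Real.one_rpow, Function.comp_def] using h2.tendsto.comp h1
  have T2 : Tendsto (fun a : ℝ => N * Gs N a / a ^ N) (nhdsWithin 0 (Set.Ioi 0)) (nhds 1) := by
    apply tendsto_of_tendsto_of_tendsto_of_le_of_le'
      (Tlow.mono_left nhdsWithin_le_nhds) tendsto_const_nhds
    · filter_upwards [hmem] with a ha using hQge a ha
    · filter_upwards [hmem] with a ha using hQle a ha
  have T2p : Tendsto (fun a : ℝ => (N * Gs N a / a ^ N) ^ (-p))
      (nhdsWithin 0 (Set.Ioi 0)) (nhds 1) := by
    have h2 : ContinuousAt (fun x : ℝ => x ^ (-p)) 1 :=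
      Real.continuousAt_rpow_const 1 (-p) (Or.inl one_ne_zero)
    simpa [Real.one_rpow, Function.comp_def] using h2.tendsto.comp T2
  -- eventual equality
  have heq : ∀ a ∈ Set.Ioo (0:ℝ) 1,
      (Real.sin a / a) ^ (N - 1) * (N * Gs N a / a ^ N) ^ (-p)
        = Real.sin a ^ (N - 1) / (N * Gs N a) ^ p := by
    intro a ha
    have hsa : 0 < Real.sin a := Real.sin_pos_of_pos_of_lt_pi ha.1 (lt_of_lt_of_le ha.2 hπ1)
    have hG : 0 < Gs N a := Gs_pos N hN ha.1 (le_trans ha.2.le hπ1)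
    have hNG : 0 < N * Gs N a := mul_pos hN0 hG
    have hapow : 0 < a ^ N := Real.rpow_pos_of_pos ha.1 N
    have e1 : (a ^ N) ^ (-p) = a ^ (-(N - 1)) := by
      rw [← Real.rpow_mul ha.1.le]
      congr 1
      have hNp : N * p = N - 1 := by
        rw [hp]
        field_simp
      linarith [hNp]
    rw [Real.div_rpow hsa.le ha.1.le, Real.div_rpow hNG.le hapow.le, e1,
        Real.rpow_neg hNG.le, Real.rpow_neg ha.1.le]
    have ha1 : a ^ (N - 1) ≠ 0 := ne_of_gt (Real.rpow_pos_of_pos ha.1 _)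
    have hNGp : (N * Gs N a) ^ p ≠ 0 := ne_of_gt (Real.rpow_pos_of_pos hNG _)
    field_simp
  have hT := T1.mul T2p
  rw [mul_one] at hT
  apply hT.congr'
  filter_upwards [hmem] with a ha
  exact heq a ha


/-- `Ĩ_{N-1,N,π}(v) = f_{N-1,N,π}(a_{N-1,N,π}(v))
= k_π^(-1/N) N^((N-1)/N) v^((N-1)/N) (1+o(1))` as `v → 0⁺`. -/
theorem stmt6 (N : ℝ) (hN : 1 < N) :
    ∀ ε > 0, ∃ vbar > 0, ∀ a ∈ Set.Ioo (0:ℝ) Real.pi,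
      vKND 1 N Real.pi a < vbar →
      |fKND 1 N Real.pi a * kD 1 N Real.pi ^ (1 / N) /
        (N ^ ((N - 1) / N) * vKND 1 N Real.pi a ^ ((N - 1) / N)) - 1| ≤ ε := by
  intro ε hε
  have hN0 : (0:ℝ) < N := by linarith
  have hπ : 0 < Real.pi := Real.pi_pos
  have hk : 0 < Gs N Real.pi := Gs_pos N hN hπ le_rfl
  have hR := tendsto_R N hN
  have hev : ∀ᶠ a in nhdsWithin (0:ℝ) (Set.Ioi 0),
      |Real.sin a ^ (N - 1) / (N * Gs N a) ^ ((N - 1) / N) - 1| < ε := by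
    have := Metric.tendsto_nhds.mp hR ε hε
    simpa [Real.dist_eq] using this
  rw [eventually_iff, mem_nhdsGT_iff_exists_Ioo_subset] at hev
  obtain ⟨δ, hδmem, hδ⟩ := hev
  set δ' := min δ (Real.pi / 2) with hδ'def
  have hδ'0 : 0 < δ' := lt_min hδmem (by positivity)
  have hδ'π : δ' < Real.pi := lt_of_le_of_lt (min_le_right _ _) (by linarith)
  refine ⟨Gs N δ' / Gs N Real.pi, div_pos (Gs_pos N hN hδ'0 hδ'π.le) hk, ?_⟩
  intro a ha hva
  rw [vKND_eq N hN ha] at hva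
  have hGa : Gs N a < Gs N δ' := by
    have h := mul_lt_mul_of_pos_right hva hk
    rwa [div_mul_cancel₀ _ (ne_of_gt hk), div_mul_cancel₀ _ (ne_of_gt hk)] at h
  have haδ' : a < δ' := by
    by_contra h
    push_neg at h
    exact absurd (Gs_mono N hN hδ'0.le h ha.2.le) (not_le.mpr hGa)
  have haδ : a ∈ Set.Ioo 0 δ := ⟨ha.1, lt_of_lt_of_le haδ' (min_le_left _ _)⟩
  have hRa := hδ haδ
  rw [Set.mem_setOf_eq] at hRa
  have hkD : kD 1 N Real.pi = Gs N Real.pi := by simp [kD, Gs, sK_one]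
  rw [fKND_eq N hN ha, vKND_eq N hN ha, hkD]
  have hG : 0 < Gs N a := Gs_pos N hN ha.1 ha.2.le
  have halg : Real.sin a ^ (N - 1) / Gs N Real.pi * Gs N Real.pi ^ (1 / N) /
      (N ^ ((N - 1) / N) * (Gs N a / Gs N Real.pi) ^ ((N - 1) / N))
      = Real.sin a ^ (N - 1) / (N * Gs N a) ^ ((N - 1) / N) := by
    rw [Real.div_rpow hG.le hk.le, Real.mul_rpow hN0.le hG.le]
    have hk1 : Gs N Real.pi ^ (1 / N) * Gs N Real.pi ^ ((N - 1) / N) = Gs N Real.pi := by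
      rw [← Real.rpow_add hk, show 1 / N + (N - 1) / N = 1 by field_simp; ring, Real.rpow_one]
    have h1 : (0:ℝ) < Gs N Real.pi ^ (1 / N) := Real.rpow_pos_of_pos hk _
    have h2 : (0:ℝ) < Gs N Real.pi ^ ((N - 1) / N) := Real.rpow_pos_of_pos hk _
    have h3 : (0:ℝ) < N ^ ((N - 1) / N) := Real.rpow_pos_of_pos hN0 _
    have h4 : (0:ℝ) < Gs N a ^ ((N - 1) / N) := Real.rpow_pos_of_pos hG _
    field_simp
    linear_combination (Real.sin a ^ (N - 1)) * hk1
  rw [halg]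
  exact hRa.le
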